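/- Let (B₁,...,B_d) be a splitting of a matrix B_J ∈ ℝ^{n×n}. If λ ≠ 0 is an eigenvalue of the associated iteration matrix 𝓑_{(d)} with eigenvector [α₁; ...; α_d], then α_p ≠ 0 for every p = 1,...,d. -/
import Mathlib


open Matrix

/-- A splitting of `B`: nonzero parts summing to `B` with pairwise vanishing
Hadamard products. -/
def IsSplitting {n d : ℕ} (B : Matrix (Fin n) (Fin n) ℝ)
    (Bs : Fin d → Matrix (Fin n) (Fin n) ℝ) : Prop :=
  (∀ p, Bs p ≠ 0) ∧ (∑ p, Bs p = B) ∧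
    ∀ p q, p ≠ q → Matrix.hadamard (Bs p) (Bs q) = 0

/-- Strictly block-lower-triangular part `𝓛` of the splitting scheme. -/
def blockL {n d : ℕ} (Bs : Fin d → Matrix (Fin n) (Fin n) ℝ) :
    Matrix (Fin d × Fin n) (Fin d × Fin n) ℝ :=
  Matrix.of fun pi qj => if qj.1 < pi.1 then Bs qj.1 pi.2 qj.2 else 0

/-- Block-upper-triangular part `𝓤` of the splitting scheme. -/
def blockU {n d : ℕ} (Bs : Fin d → Matrix (Fin n) (Fin n) ℝ) :
    Matrix (Fin d × Fin n) (Fin d × Fin n) ℝ :=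
  Matrix.of fun pi qj => if pi.1 ≤ qj.1 then Bs qj.1 pi.2 qj.2 else 0

/-- The iteration matrix `𝓑 = (𝓘 - 𝓛)⁻¹ 𝓤` of a splitting. -/
noncomputable def iterMat {n d : ℕ} (Bs : Fin d → Matrix (Fin n) (Fin n) ℝ) :
    Matrix (Fin d × Fin n) (Fin d × Fin n) ℝ :=
  (1 - blockL Bs)⁻¹ * blockU Bs

/-- Complexification of the iteration matrix. -/
noncomputable def iterMatC {n d : ℕ} (Bs : Fin d → Matrix (Fin n) (Fin n) ℝ) :
    Matrix (Fin d × Fin n) (Fin d × Fin n) ℂ :=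
  (iterMat Bs).map Complex.ofReal

/-- Spectral radius of a real matrix, via its complexification. -/
noncomputable def specRad {m : Type*} [Fintype m] [DecidableEq m]
    (M : Matrix m m ℝ) : ENNReal :=
  spectralRadius ℂ (M.map Complex.ofReal)

open Finset in
lemma det_one_sub_blockL {n d : ℕ} (Bs : Fin d → Matrix (Fin n) (Fin n) ℝ) :
    (1 - blockL Bs).det = 1 := by
  have hbt : BlockTriangular (1 - blockL Bs)
      (fun pi : Fin d × Fin n => OrderDual.toDual pi.1) := by
    intro i j hij
    simp only [OrderDual.toDual_lt_toDual] at hij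
    have hne : i ≠ j := by
      intro h; subst h; exact lt_irrefl _ hij
    simp [blockL, Matrix.sub_apply, Matrix.one_apply_ne hne, not_lt_of_gt hij,
      if_neg (not_lt.mpr hij.le)]
  rw [hbt.det_fintype]
  have : ∀ k, ((1 - blockL Bs).toSquareBlock
      (fun pi : Fin d × Fin n => OrderDual.toDual pi.1) k) = 1 := by
    intro k
    ext i j
    have hi : (i : Fin d × Fin n).1 = (j : Fin d × Fin n).1 := by
      have := i.2.trans j.2.symm
      exact congrArg OrderDual.ofDual this
    simp only [toSquareBlock_def, Matrix.sub_apply, Matrix.one_apply, blockL,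
      Matrix.of_apply, hi, lt_irrefl, if_false, sub_zero]
    by_cases h : i = j
    · simp [h]
    · rw [if_neg (fun hh => h (Subtype.ext hh)), if_neg h]
  simp [this]

/-- Every block of an eigenvector of the iteration matrix of a splitting,
associated with a nonzero eigenvalue, is nonzero. -/
theorem eigenvector_blocks_nonzero (n d : ℕ) (BJ : Matrix (Fin n) (Fin n) ℝ)
    (Bs : Fin d → Matrix (Fin n) (Fin n) ℝ)
    (hsplit : IsSplitting BJ Bs)
    (lam : ℂ) (hlam : lam ≠ 0)
    (v : Fin d × Fin n → ℂ) (hv : v ≠ 0)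
    (heig : (iterMatC Bs).mulVec v = lam • v) :
    ∀ p : Fin d, (fun i => v (p, i)) ≠ 0 := by
  classical
  have hdet : IsUnit (1 - blockL Bs).det := by
    rw [det_one_sub_blockL]; exact isUnit_one
  have h1 : (1 - blockL Bs) * iterMat Bs = blockU Bs := by
    rw [iterMat, ← mul_assoc, mul_nonsing_inv _ hdet, one_mul]
  have h2 : ((1 - blockL Bs).map Complex.ofReal).mulVec (lam • v)
      = ((blockU Bs).map Complex.ofReal).mulVec v := by
    rw [← heig, iterMatC, mulVec_mulVec]
    rw [← h1]
    exact congrArg (fun M => M.mulVec v)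
      (Matrix.map_mul (L := 1 - blockL Bs) (M := iterMat Bs) (f := Complex.ofRealHom)).symm
  have hone : ((1 - blockL Bs).map Complex.ofReal)
      = 1 - (blockL Bs).map Complex.ofReal := by
    ext i j
    by_cases h : i = j <;>
      simp [Matrix.map_apply, Matrix.one_apply, h]
  rw [hone, sub_mulVec, one_mulVec] at h2
  set Mv : Fin d → Fin n → ℂ := fun q i => ∑ j, ((Bs q i j : ℝ) : ℂ) * v (q, j)
    with hMvdef
  have key : ∀ (p : Fin d) (i : Fin n),
      lam * v (p, i) - lam * (∑ q, if q < p then Mv q i else 0)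
        = ∑ q, if p ≤ q then Mv q i else 0 := by
    intro p i
    have h := congrFun h2 (p, i)
    simp only [Pi.sub_apply, Pi.smul_apply, smul_eq_mul, mulVec, dotProduct,
      Fintype.sum_prod_type, Matrix.map_apply, blockL, blockU, Matrix.of_apply,
      apply_ite Complex.ofReal, Complex.ofReal_zero, ite_mul, zero_mul,
      Finset.sum_ite_irrel, Finset.sum_const_zero, hMvdef] at h ⊢
    rw [← h]
    congr 1
    rw [Finset.mul_sum]
    apply Finset.sum_congr rfl
    intro q _
    rw [mul_ite, mul_zero]
    congr 1
    rw [Finset.mul_sum]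
    apply Finset.sum_congr rfl
    intro j _
    ring
  have hMzero : ∀ p : Fin d, (fun i => v (p, i)) = 0 → Mv p = 0 := by
    intro p hp
    funext i
    simp only [hMvdef]
    apply Finset.sum_eq_zero
    intro j _
    rw [show v (p, j) = 0 from congrFun hp j, mul_zero]
  have step : ∀ p p' : Fin d, (p : ℕ) + 1 = (p' : ℕ) →
      (fun i => v (p, i)) = 0 → (fun i => v (p', i)) = 0 := by
    intro p p' hpp hp
    have hm := hMzero p hp
    funext i
    show v (p', i) = 0
    have k1 := key p i
    have k2 := key p' i
    have e1 : (∑ q, if p ≤ q then Mv q i else 0)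
        = (∑ q, if p' ≤ q then Mv q i else 0) := by
      apply Finset.sum_congr rfl
      intro q _
      by_cases hq : q = p
      · subst hq; simp [hm]
      · have hiff : p ≤ q ↔ p' ≤ q := by
          rw [Fin.le_def, Fin.le_def]
          have hne : (q : ℕ) ≠ (p : ℕ) := fun hh => hq (Fin.ext hh)
          omega
        rw [if_congr hiff rfl rfl]
    have e2 : (∑ q, if q < p then Mv q i else 0)
        = (∑ q, if q < p' then Mv q i else 0) := by
      apply Finset.sum_congr rfl
      intro q _
      by_cases hq : q = p
      · subst hq; simp [hm]
      · have hiff : q < p ↔ q < p' := by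
          rw [Fin.lt_def, Fin.lt_def]
          have hne : (q : ℕ) ≠ (p : ℕ) := fun hh => hq (Fin.ext hh)
          omega
        rw [if_congr hiff rfl rfl]
    rw [← e1, ← e2] at k2
    have h0 : v (p, i) = 0 := congrFun hp i
    have hz : lam * v (p', i) = lam * v (p, i) := by
      linear_combination k2 - k1
    rw [h0] at hz
    exact mul_left_cancel₀ hlam (by rw [hz, mul_zero])
  have hd : 0 < d := by
    rcases Function.ne_iff.mp hv with ⟨⟨q, j⟩, -⟩
    exact q.pos
  have wrap : ∀ p : Fin d, (p : ℕ) + 1 = d → (fun i => v (p, i)) = 0 →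
      (fun i => v ((⟨0, hd⟩ : Fin d), i)) = 0 := by
    intro p hp hzp
    have hm := hMzero p hzp
    funext i
    show v ((⟨0, hd⟩ : Fin d), i) = 0
    have k1 := key p i
    have k0 := key ⟨0, hd⟩ i
    have e1 : (∑ q, if p ≤ q then Mv q i else 0) = 0 := by
      apply Finset.sum_eq_zero
      intro q _
      by_cases hq : q = p
      · subst hq; simp [hm]
      · rw [if_neg]
        rw [Fin.le_def]
        have hne : (q : ℕ) ≠ (p : ℕ) := fun hh => hq (Fin.ext hh)
        have := q.isLt
        omega
    have e0 : (∑ q, if q < (⟨0, hd⟩ : Fin d) then Mv q i else 0) = 0 := by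
      apply Finset.sum_eq_zero
      intro q _
      rw [if_neg]
      simp only [Fin.lt_def, Fin.val_mk]
      omega
    have e2 : (∑ q, if (⟨0, hd⟩ : Fin d) ≤ q then Mv q i else 0)
        = ∑ q, if q < p then Mv q i else 0 := by
      apply Finset.sum_congr rfl
      intro q _
      by_cases hq : q = p
      · subst hq; simp [hm]
      · rw [if_pos, if_pos]
        · simp only [Fin.lt_def, Fin.val_mk]
          have hne : (q : ℕ) ≠ (p : ℕ) := fun hh => hq (Fin.ext hh)
          have := q.isLt
          omega
        · simp only [Fin.le_def, Fin.val_mk]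
          omega
    have h0 : v (p, i) = 0 := congrFun hzp i
    rw [h0, e1, mul_zero, zero_sub, neg_eq_zero] at k1
    have hS : (∑ q, if q < p then Mv q i else 0) = 0 :=
      (mul_eq_zero.mp k1).resolve_left hlam
    rw [e0, e2, hS, mul_zero, sub_zero] at k0
    exact mul_left_cancel₀ hlam (by rw [k0, mul_zero])
  have fwd : ∀ m : ℕ, ∀ p : Fin d, (fun i => v (p, i)) = 0 →
      ∀ p' : Fin d, (p' : ℕ) = (p : ℕ) + m → (fun i => v (p', i)) = 0 := by
    intro m
    induction m with
    | zero =>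
      intro p hp p' h
      have : p' = p := Fin.ext (by omega)
      rwa [this]
    | succ m ih =>
      intro p hp p' h
      have hm : (p : ℕ) + m < d := by have := p'.isLt; omega
      have hmid := ih p hp ⟨(p : ℕ) + m, hm⟩ rfl
      exact step ⟨(p : ℕ) + m, hm⟩ p' (by simp only [Fin.val_mk]; omega) hmid
  intro p hp
  have hlast : (fun i => v ((⟨d - 1, by omega⟩ : Fin d), i)) = 0 := by
    refine fwd (d - 1 - (p : ℕ)) p hp _ ?_
    simp only [Fin.val_mk]
    have := p.isLt
    omega
  have h0 := wrap ⟨d - 1, by omega⟩ (by simp only [Fin.val_mk]; omega) hlast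
  apply hv
  funext qj
  obtain ⟨q, j⟩ := qj
  have := fwd (q : ℕ) ⟨0, hd⟩ h0 q (by simp)
  exact congrFun this j
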